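/- Let 0 ≤ k₁ ≤ k₂ ≤ ⋯ ≤ k_N be strikes with prices q₁, …, q_N ∈ ℝ such that q_N > 0, let k ≥ 0 and M > 0. Let F be the set of Borel probability measures μ on [0,∞) with ∫ max(0, x − k_j) dμ(x) = q_j for all j ∈ [N] and ∫ x² dμ(x) ≤ M. If the infimum of ∫ max(0, x − k) dμ(x) over F is attained, then it is attained by a finitely atomic measure μ* whose support is contained in the interval [0, B], where B = (M + √(M·(M − 4·q_N·k_N)))/(2·q_N). -/

import Mathlib

open MeasureTheory


lemma quad_bound (M qN kN m : ℝ) (hq : 0 < qN)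
    (hineq : qN * m ^ 2 - M * m + M * kN ≤ 0) :
    m ≤ (M + Real.sqrt (M * (M - 4 * qN * kN))) / (2 * qN) := by
  have hD : (2 * qN * m - M) ^ 2 ≤ M * (M - 4 * qN * kN) := by nlinarith
  have h1 : 2 * qN * m - M ≤ Real.sqrt (M * (M - 4 * qN * kN)) :=
    calc 2 * qN * m - M ≤ |2 * qN * m - M| := le_abs_self _
      _ = Real.sqrt ((2 * qN * m - M) ^ 2) := (Real.sqrt_sq_eq_abs _).symm
      _ ≤ _ := Real.sqrt_le_sqrt hD
  rw [le_div_iff₀ (by positivity)]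
  linarith

lemma integrable_dirac_of_measurable {f : ℝ → ℝ} (hf : Measurable f) (a : ℝ) :
    Integrable f (Measure.dirac a) := by
  refine ⟨hf.aestronglyMeasurable, ?_⟩
  rw [HasFiniteIntegral, lintegral_dirac]
  exact ENNReal.coe_lt_top

/-- Conclusion of Section 4.2: in the univariate problem, if the infimum is attained then
it is attained by a finitely atomic measure whose support is contained in `[0, B]` with
`B = (M + √(M(M - 4·q_N·k_N)))/(2·q_N)`. -/
theorem univariate_support_bound
    (N : ℕ) (hN : 0 < N)
    (ks : Fin N → ℝ) (q : Fin N → ℝ)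
    (hmono : Monotone ks)
    (hks0 : 0 ≤ ks ⟨0, hN⟩)
    (kN : ℝ) (hkN : kN = ks ⟨N - 1, Nat.sub_lt hN one_pos⟩)
    (qN : ℝ) (hqN : qN = q ⟨N - 1, Nat.sub_lt hN one_pos⟩) (hqNpos : 0 < qN)
    (k : ℝ) (hk : 0 ≤ k) (M : ℝ) (hM : 0 < M)
    (B : ℝ) (hB : B = (M + Real.sqrt (M * (M - 4 * qN * kN))) / (2 * qN))
    (F : Set (Measure ℝ))
    (hF : F = {μ | IsProbabilityMeasure μ ∧ μ (Set.Iio 0) = 0 ∧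
        (∀ j, Integrable (fun x => max 0 (x - ks j)) μ ∧
          ∫ x, max 0 (x - ks j) ∂μ = q j) ∧
        Integrable (fun x => x ^ 2) μ ∧ ∫ x, x ^ 2 ∂μ ≤ M})
    (hatt : ∃ μ ∈ F, ∫ x, max 0 (x - k) ∂μ =
        sInf ((fun ν => ∫ x, max 0 (x - k) ∂ν) '' F)) :
    ∃ μ ∈ F, ∫ x, max 0 (x - k) ∂μ = sInf ((fun ν => ∫ x, max 0 (x - k) ∂ν) '' F) ∧
      ∃ (J : ℕ) (ω : Fin J → ℝ) (pts : Fin J → ℝ),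
        (∀ j, 0 < ω j) ∧ (∀ j, pts j ∈ Set.Icc 0 B) ∧
        μ = ∑ j, ENNReal.ofReal (ω j) • Measure.dirac (pts j) := by
  classical
  obtain ⟨μ0, hμ0F, hμ0opt⟩ := hatt
  have hμ0F' := hμ0F
  rw [hF] at hμ0F'
  obtain ⟨hprob, hIio, hcons, hx2int, hx2le⟩ := hμ0F'
  set iN : Fin N := ⟨N - 1, Nat.sub_lt hN one_pos⟩ with hiN
  -- cells
  set A : Finset (Fin N) → Set ℝ := fun S => {x | 0 ≤ x ∧ ∀ j, ks j ≤ x ↔ j ∈ S} with hA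
  have hAmeas : ∀ S, MeasurableSet (A S) := by
    intro S
    have : A S = Set.Ici 0 ∩ ⋂ j, (if j ∈ S then Set.Ici (ks j) else Set.Iio (ks j)) := by
      ext x
      simp only [hA, Set.mem_setOf_eq, Set.mem_inter_iff, Set.mem_Ici, Set.mem_iInter]
      constructor
      · rintro ⟨hx0, hx⟩
        refine ⟨hx0, fun j => ?_⟩
        by_cases hj : j ∈ S
        · simp only [hj, if_pos, Set.mem_Ici]
          exact (hx j).2 hj
        · simp only [hj, if_neg, Set.mem_Iio, not_false_iff]
          by_contra hcon
          exact hj ((hx j).1 (le_of_not_gt hcon))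
      · rintro ⟨hx0, hx⟩
        refine ⟨hx0, fun j => ?_⟩
        by_cases hj : j ∈ S
        · have := hx j
          rw [if_pos hj] at this
          exact ⟨fun _ => hj, fun _ => this⟩
        · have := hx j
          rw [if_neg hj] at this
          exact ⟨fun h => absurd h (not_le.2 this), fun h => absurd h hj⟩
    rw [this]
    exact measurableSet_Ici.inter (MeasurableSet.iInter fun j => by
      by_cases hj : j ∈ S
      · rw [if_pos hj]; exact measurableSet_Ici
      · rw [if_neg hj]; exact measurableSet_Iio)
  have hdisj : Pairwise (Function.onFun Disjoint A) := by
    intro S T hST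
    rw [Function.onFun]
    rw [Set.disjoint_left]
    intro x hxS hxT
    exact hST (by ext j; rw [← (hxS.2 j), (hxT.2 j)])
  have hcover : (⋃ S, A S) = Set.Ici 0 := by
    ext x
    constructor
    · rintro ⟨s, ⟨S, rfl⟩, hx⟩
      exact hx.1
    · intro hx
      refine Set.mem_iUnion.2 ⟨Finset.univ.filter (fun j => ks j ≤ x), hx, fun j => ?_⟩
      simp [Finset.mem_filter]
  have hIci : μ0 (Set.Ici 0) = 1 := by
    have h1 := measure_add_measure_compl (μ := μ0) (measurableSet_Ici (a := (0:ℝ)))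
    rw [Set.compl_Ici, hIio, add_zero, measure_univ] at h1
    exact h1
  have hrestr : μ0.restrict (Set.Ici 0) = μ0 :=
    Measure.restrict_eq_self_of_ae_mem (by
      rw [Filter.eventually_iff, mem_ae_iff]
      rwa [show {x : ℝ | x ∈ Set.Ici 0}ᶜ = Set.Iio 0 by ext y; simp [Set.mem_Iio, not_le]])
  -- integrabilities
  have hintabs : Integrable (fun x => |x|) μ0 := by
    refine Integrable.mono' ((integrable_const (1:ℝ)).add hx2int)
      measurable_abs.aestronglyMeasurable (Filter.Eventually.of_forall fun x => ?_)
    simp only [Real.norm_eq_abs, abs_abs, Pi.add_apply]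
    nlinarith [sq_nonneg (|x| - 1), sq_abs x]
  have hintid : Integrable (fun x => x) μ0 :=
    hintabs.mono' measurable_id.aestronglyMeasurable
      (Filter.Eventually.of_forall fun x => by simp [Real.norm_eq_abs])
  have hmaxmeas : ∀ t : ℝ, Measurable (fun x : ℝ => max 0 (x - t)) := fun t =>
    measurable_const.max (measurable_id.sub measurable_const)
  have hintmax : ∀ t : ℝ, 0 ≤ t → Integrable (fun x => max 0 (x - t)) μ0 := by
    intro t ht
    refine hintabs.mono' (hmaxmeas t).aestronglyMeasurable
      (Filter.Eventually.of_forall fun x => ?_)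
    rw [Real.norm_eq_abs, abs_of_nonneg (le_max_left _ _)]
    exact max_le (abs_nonneg x) (le_trans (by linarith) (le_abs_self x))
  have hdecomp : ∀ f : ℝ → ℝ, Integrable f μ0 →
      ∫ x, f x ∂μ0 = ∑ S : Finset (Fin N), ∫ x in A S, f x ∂μ0 := by
    intro f hf
    conv_lhs => rw [← hrestr]
    rw [← hcover, integral_iUnion_fintype hAmeas hdisj (fun S => hf.integrableOn)]
  -- masses and means
  set p : Finset (Fin N) → ℝ := fun S => (μ0 (A S)).toReal with hp
  set I : Finset (Fin N) → ℝ := fun S => ∫ x in A S, x ∂μ0 with hI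
  set m : Finset (Fin N) → ℝ := fun S => I S / p S with hm
  have hpnn : ∀ S, 0 ≤ p S := fun S => ENNReal.toReal_nonneg
  have hpmem : ∀ S, μ0 (A S) ≠ ⊤ := fun S => measure_ne_top μ0 _
  have hIpm : ∀ S, p S ≠ 0 → I S = p S * m S := by
    intro S h
    rw [hm]
    field_simp
  have hzero : ∀ (S) (f : ℝ → ℝ), p S = 0 → ∫ x in A S, f x ∂μ0 = 0 := by
    intro S f h
    have : μ0 (A S) = 0 := by
      have := ENNReal.toReal_eq_zero_iff (μ0 (A S))
      rw [hp] at h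
      rcases this.1 h with h' | h'
      · exact h'
      · exact absurd h' (hpmem S)
    rw [Measure.restrict_eq_zero.2 this, integral_zero_measure]
  have hconst : ∀ (S) (c : ℝ), ∫ _ in A S, c ∂μ0 = p S * c := by
    intro S c
    rw [setIntegral_const, smul_eq_mul]; rfl
  have hmean_ge : ∀ S t, (∀ x ∈ A S, t ≤ x) → p S * t ≤ I S := by
    intro S t h
    rw [← hconst S t]
    exact setIntegral_mono_on
      (integrableOn_const (hpmem S))
      hintid.integrableOn (hAmeas S) h
  have hmean_le : ∀ S t, (∀ x ∈ A S, x ≤ t) → I S ≤ p S * t := by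
    intro S t h
    rw [← hconst S t]
    exact setIntegral_mono_on hintid.integrableOn
      (integrableOn_const (hpmem S))
      (hAmeas S) h
  have hdichot1 : ∀ S j, j ∈ S → ∀ x ∈ A S, ks j ≤ x := fun S j hj x hx => (hx.2 j).2 hj
  have hdichot2 : ∀ S j, j ∉ S → ∀ x ∈ A S, x ≤ ks j := by
    intro S j hj x hx
    by_contra hcon
    exact hj ((hx.2 j).1 (le_of_lt (not_le.1 hcon)))
  have hcellEq : ∀ S t, p S ≠ 0 → ((∀ x ∈ A S, t ≤ x) ∨ (∀ x ∈ A S, x ≤ t)) →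
      ∫ x in A S, max 0 (x - t) ∂μ0 = p S * max 0 (m S - t) := by
    intro S t hp0 hcase
    have hppos : 0 < p S := lt_of_le_of_ne (hpnn S) (Ne.symm hp0)
    rcases hcase with hge | hle
    · have e1 : ∫ x in A S, max 0 (x - t) ∂μ0 = ∫ x in A S, (x - t) ∂μ0 :=
        setIntegral_congr_fun (hAmeas S) (fun x hx => max_eq_right (sub_nonneg.2 (hge x hx)))
      have e2 : ∫ x in A S, (x - t) ∂μ0 = I S - p S * t := by
        rw [integral_sub hintid.integrableOn
          (integrableOn_const (hpmem S)), hconst]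
      have hmt : t ≤ m S := by
        rw [hm, le_div_iff₀ hppos]
        have := hmean_ge S t hge
        linarith [this]
      rw [e1, e2, hIpm S hp0, max_eq_right (sub_nonneg.2 hmt)]
      ring
    · have e1 : ∫ x in A S, max 0 (x - t) ∂μ0 = 0 := by
        rw [setIntegral_congr_fun (hAmeas S)
          (g := fun _ => (0:ℝ)) (fun x hx => max_eq_left (sub_nonpos.2 (hle x hx)))]
        exact integral_zero _ _
      have hmt : m S ≤ t := by
        rw [hm, div_le_iff₀ hppos]
        have := hmean_le S t hle
        linarith [this]
      rw [e1, max_eq_left (sub_nonpos.2 hmt), mul_zero]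
  have hcellStrike : ∀ S, p S ≠ 0 → ∀ i : Fin N,
      ∫ x in A S, max 0 (x - ks i) ∂μ0 = p S * max 0 (m S - ks i) := by
    intro S hp0 i
    refine hcellEq S (ks i) hp0 ?_
    by_cases hi : i ∈ S
    · exact Or.inl (hdichot1 S i hi)
    · exact Or.inr (hdichot2 S i hi)
  have hcellObj : ∀ S, p S ≠ 0 →
      p S * max 0 (m S - k) ≤ ∫ x in A S, max 0 (x - k) ∂μ0 := by
    intro S hp0
    have hppos : 0 < p S := lt_of_le_of_ne (hpnn S) (Ne.symm hp0)
    have h2 : (0:ℝ) ≤ ∫ x in A S, max 0 (x - k) ∂μ0 :=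
      setIntegral_nonneg (hAmeas S) (fun x _ => le_max_left _ _)
    have h1 : I S - p S * k ≤ ∫ x in A S, max 0 (x - k) ∂μ0 := by
      have : ∫ x in A S, (x - k) ∂μ0 ≤ ∫ x in A S, max 0 (x - k) ∂μ0 :=
        setIntegral_mono_on
          (hintid.integrableOn.sub (integrableOn_const (hpmem S)))
          (hintmax k hk).integrableOn (hAmeas S) (fun x _ => le_max_right _ _)
      rwa [integral_sub hintid.integrableOn
        (integrableOn_const (hpmem S)), hconst] at this
    rcases le_total (m S - k) 0 with hmk | hmk
    · rw [max_eq_left hmk, mul_zero]; exact h2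
    · rw [max_eq_right hmk]
      have := hIpm S hp0
      nlinarith [h1]
  have hcellSq : ∀ S, p S ≠ 0 → p S * (m S) ^ 2 ≤ ∫ x in A S, x ^ 2 ∂μ0 := by
    intro S hp0
    have i1 : IntegrableOn (fun x : ℝ => 2 * m S * x) (A S) μ0 :=
      hintid.integrableOn.const_mul _
    have i2 : IntegrableOn (fun _ : ℝ => (m S) ^ 2) (A S) μ0 :=
      integrableOn_const (hpmem S)
    have i3 : IntegrableOn (fun x : ℝ => 2 * m S * x - (m S) ^ 2) (A S) μ0 := i1.sub i2
    have key : ∫ x in A S, (2 * m S * x - (m S) ^ 2) ∂μ0 ≤ ∫ x in A S, x ^ 2 ∂μ0 :=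
      setIntegral_mono_on i3 hx2int.integrableOn (hAmeas S)
        (fun x _ => by nlinarith [sq_nonneg (x - m S)])
    have lhs : ∫ x in A S, (2 * m S * x - (m S) ^ 2) ∂μ0
        = 2 * m S * I S - p S * (m S) ^ 2 := by
      rw [integral_sub i1 i2, integral_const_mul, hconst, hI]
    have e2 : 2 * m S * I S - p S * (m S) ^ 2 = p S * (m S) ^ 2 := by
      rw [hIpm S hp0]; ring
    rw [lhs, e2] at key
    exact key
  -- top cell analysis
  have hksle : ∀ j : Fin N, ks j ≤ ks iN := by
    intro j
    exact hmono (by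
      rw [Fin.le_def]
      exact Nat.le_pred_of_lt j.2)
  have hne : ∀ S, p S ≠ 0 → (A S).Nonempty := by
    intro S hS
    rcases Set.eq_empty_or_nonempty (A S) with h | h
    · exfalso
      apply hS
      rw [hp]
      simp [h]
    · exact h
  have htop : ∀ S, (A S).Nonempty → iN ∈ S → S = Finset.univ := by
    intro S ⟨x, hx⟩ hiNS
    apply Finset.eq_univ_of_forall
    intro j
    exact (hx.2 j).1 (le_trans (hksle j) ((hx.2 iN).2 hiNS))
  have hqN_univ : qN = ∫ x in A Finset.univ, max 0 (x - ks iN) ∂μ0 := by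
    have h1 : qN = ∑ S : Finset (Fin N), ∫ x in A S, max 0 (x - ks iN) ∂μ0 := by
      rw [hqN, ← (hcons iN).2, hdecomp _ (hcons iN).1]
    rw [h1]
    refine Finset.sum_eq_single Finset.univ (fun S _ hS => ?_)
      (fun h => absurd (Finset.mem_univ _) h)
    by_cases hp0 : p S = 0
    · exact hzero S _ hp0
    · have hiNS : iN ∉ S := fun hmem => hS (htop S (hne S hp0) hmem)
      rw [setIntegral_congr_fun (hAmeas S) (g := fun _ => (0:ℝ))
        (fun x hx => max_eq_left (sub_nonpos.2 (hdichot2 S iN hiNS x hx)))]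
      exact integral_zero _ _
  have hpuniv : p Finset.univ ≠ 0 := by
    intro h
    rw [hqN_univ, hzero _ _ h] at hqNpos
    exact lt_irrefl 0 hqNpos
  have hpunivpos : 0 < p Finset.univ := lt_of_le_of_ne (hpnn _) (Ne.symm hpuniv)
  have hmuniv : qN = p Finset.univ * max 0 (m Finset.univ - kN) := by
    rw [hqN_univ, hkN]
    exact hcellEq Finset.univ (ks iN) hpuniv
      (Or.inl (hdichot1 Finset.univ iN (Finset.mem_univ _)))
  have hmgt : kN < m Finset.univ := by
    by_contra hcon
    rw [max_eq_left (sub_nonpos.2 (not_lt.1 hcon)), mul_zero] at hmuniv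
    exact lt_irrefl 0 (hmuniv ▸ hqNpos)
  have hquniv : qN = p Finset.univ * (m Finset.univ - kN) := by
    rw [hmuniv, max_eq_right (sub_nonneg.2 hmgt.le)]
  have hsquniv : p Finset.univ * (m Finset.univ) ^ 2 ≤ M := by
    refine le_trans (hcellSq Finset.univ hpuniv) (le_trans ?_ hx2le)
    rw [hdecomp _ hx2int]
    exact Finset.single_le_sum
      (fun S _ => setIntegral_nonneg (hAmeas S) (fun x _ => sq_nonneg x))
      (Finset.mem_univ _)
  have hquad : qN * (m Finset.univ) ^ 2 - M * m Finset.univ + M * kN ≤ 0 := by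
    have h1 : p Finset.univ * (m Finset.univ) ^ 2 * (m Finset.univ - kN)
        ≤ M * (m Finset.univ - kN) :=
      mul_le_mul_of_nonneg_right hsquniv (sub_nonneg.2 hmgt.le)
    have h2 : qN * (m Finset.univ) ^ 2
        = p Finset.univ * (m Finset.univ) ^ 2 * (m Finset.univ - kN) := by
      rw [hquniv]; ring
    linarith
  have hmB : m Finset.univ ≤ B := by
    rw [hB]
    exact quad_bound M qN kN _ hqNpos hquad
  have hkNB : kN ≤ B := hmgt.le.trans hmB
  have hm_mem : ∀ S, p S ≠ 0 → m S ∈ Set.Icc 0 B := by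
    intro S hp0
    have hppos : 0 < p S := lt_of_le_of_ne (hpnn S) (Ne.symm hp0)
    constructor
    · have h0 : 0 ≤ I S := by
        have := hmean_ge S 0 (fun x hx => hx.1)
        simpa using this
      exact div_nonneg h0 (hpnn S)
    · by_cases hSu : S = Finset.univ
      · rw [hSu]; exact hmB
      · have hiNS : iN ∉ S := fun hmem => hSu (htop S (hne S hp0) hmem)
        have : m S ≤ ks iN := by
          rw [hm, div_le_iff₀ hppos]
          have := hmean_le S (ks iN) (hdichot2 S iN hiNS)
          linarith
        exact le_trans this (hkN ▸ hkNB)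
  -- the finitely atomic measure
  set 𝒮 : Finset (Finset (Fin N)) := Finset.univ.filter (fun S => p S ≠ 0) with hSdef
  have hmemS : ∀ S ∈ 𝒮, p S ≠ 0 := fun S hS => (Finset.mem_filter.1 hS).2
  have hnotS : ∀ S ∉ 𝒮, p S = 0 := by
    intro S hS
    by_contra h
    exact hS (Finset.mem_filter.2 ⟨Finset.mem_univ _, h⟩)
  set J : ℕ := 𝒮.card with hJ
  set e : Fin J ≃ {x // x ∈ 𝒮} := 𝒮.equivFin.symm with he
  set ω : Fin J → ℝ := fun j => p ((e j) : Finset (Fin N)) with hω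
  set pts : Fin J → ℝ := fun j => m ((e j) : Finset (Fin N)) with hpts
  set ν : Measure ℝ := ∑ j : Fin J, ENNReal.ofReal (ω j) • Measure.dirac (pts j) with hν
  have hνS : ν = ∑ S ∈ 𝒮, ENNReal.ofReal (p S) • Measure.dirac (m S) := by
    rw [hν, ← Finset.sum_coe_sort 𝒮 (fun S => ENNReal.ofReal (p S) • Measure.dirac (m S))]
    exact Equiv.sum_comp 𝒮.equivFin.symm
      (fun s : {x // x ∈ 𝒮} => ENNReal.ofReal (p s) • Measure.dirac (m s))
  have hofReal : ∀ S, ENNReal.ofReal (p S) = μ0 (A S) := fun S =>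
    ENNReal.ofReal_toReal (hpmem S)
  have hμAzero : ∀ S, p S = 0 → μ0 (A S) = 0 := by
    intro S h
    rw [← hofReal S, h, ENNReal.ofReal_zero]
  have hint_ν : ∀ f : ℝ → ℝ, Measurable f → Integrable f ν := by
    intro f hf
    rw [hνS]
    refine integrable_finset_sum_measure.2 (fun S _ => ?_)
    exact (integrable_dirac_of_measurable hf (m S)).smul_measure ENNReal.ofReal_ne_top
  have hint_calc : ∀ f : ℝ → ℝ, Measurable f →
      ∫ x, f x ∂ν = ∑ S ∈ 𝒮, p S * f (m S) := by
    intro f hf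
    rw [hνS, integral_finset_sum_measure
      (fun S _ => (integrable_dirac_of_measurable hf (m S)).smul_measure ENNReal.ofReal_ne_top)]
    refine Finset.sum_congr rfl (fun S hS => ?_)
    rw [integral_smul_measure, integral_dirac, ENNReal.toReal_ofReal (hpnn S), smul_eq_mul]
  have hprobν : IsProbabilityMeasure ν := by
    constructor
    rw [hνS, Measure.finset_sum_apply]
    have e1 : ∑ S ∈ 𝒮, (ENNReal.ofReal (p S) • Measure.dirac (m S)) Set.univ
        = ∑ S ∈ 𝒮, μ0 (A S) := by
      refine Finset.sum_congr rfl (fun S _ => ?_)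
      rw [Measure.smul_apply, measure_univ, smul_eq_mul, mul_one, hofReal]
    have e2 : ∑ S ∈ 𝒮, μ0 (A S) = ∑ S : Finset (Fin N), μ0 (A S) :=
      Finset.sum_subset (Finset.subset_univ _)
        (fun S _ hS => hμAzero S (hnotS S hS))
    have e3 : ∑ S : Finset (Fin N), μ0 (A S) = μ0 (⋃ S, A S) := by
      rw [measure_iUnion hdisj hAmeas, tsum_fintype]
    rw [e1, e2, e3, hcover, hIci]
  have hν_Iio : ν (Set.Iio 0) = 0 := by
    rw [hνS, Measure.finset_sum_apply]
    refine Finset.sum_eq_zero (fun S hS => ?_)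
    rw [Measure.smul_apply, Measure.dirac_apply' _ measurableSet_Iio,
      Set.indicator_of_notMem (by
        simp only [Set.mem_Iio, not_lt]
        exact (hm_mem S (hmemS S hS)).1), smul_zero]
  have hconsν : ∀ j, Integrable (fun x => max 0 (x - ks j)) ν ∧
      ∫ x, max 0 (x - ks j) ∂ν = q j := by
    intro j
    refine ⟨hint_ν _ (hmaxmeas _), ?_⟩
    rw [hint_calc _ (hmaxmeas _)]
    have e1 : ∑ S ∈ 𝒮, p S * max 0 (m S - ks j)
        = ∑ S ∈ 𝒮, ∫ x in A S, max 0 (x - ks j) ∂μ0 :=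
      Finset.sum_congr rfl (fun S hS => (hcellStrike S (hmemS S hS) j).symm)
    have e2 : ∑ S ∈ 𝒮, ∫ x in A S, max 0 (x - ks j) ∂μ0
        = ∑ S : Finset (Fin N), ∫ x in A S, max 0 (x - ks j) ∂μ0 :=
      Finset.sum_subset (Finset.subset_univ _)
        (fun S _ hS => hzero S _ (hnotS S hS))
    rw [e1, e2, ← hdecomp _ (hcons j).1, (hcons j).2]
  have hx2meas : Measurable (fun x : ℝ => x ^ 2) := measurable_id.pow_const 2
  have hx2ν : ∫ x, x ^ 2 ∂ν ≤ M := by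
    rw [hint_calc _ hx2meas]
    calc ∑ S ∈ 𝒮, p S * (m S) ^ 2
        ≤ ∑ S ∈ 𝒮, ∫ x in A S, x ^ 2 ∂μ0 :=
          Finset.sum_le_sum (fun S hS => hcellSq S (hmemS S hS))
      _ ≤ ∑ S : Finset (Fin N), ∫ x in A S, x ^ 2 ∂μ0 :=
          Finset.sum_le_sum_of_subset_of_nonneg (Finset.subset_univ _)
            (fun S _ _ => setIntegral_nonneg (hAmeas S) (fun x _ => sq_nonneg x))
      _ = ∫ x, x ^ 2 ∂μ0 := (hdecomp _ hx2int).symm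
      _ ≤ M := hx2le
  have hνF : ν ∈ F := by
    rw [hF]
    exact ⟨hprobν, hν_Iio, hconsν, hint_ν _ hx2meas, hx2ν⟩
  have hobjν : ∫ x, max 0 (x - k) ∂ν ≤ ∫ x, max 0 (x - k) ∂μ0 := by
    rw [hint_calc _ (hmaxmeas k)]
    calc ∑ S ∈ 𝒮, p S * max 0 (m S - k)
        ≤ ∑ S ∈ 𝒮, ∫ x in A S, max 0 (x - k) ∂μ0 :=
          Finset.sum_le_sum (fun S hS => hcellObj S (hmemS S hS))
      _ ≤ ∑ S : Finset (Fin N), ∫ x in A S, max 0 (x - k) ∂μ0 :=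
          Finset.sum_le_sum_of_subset_of_nonneg (Finset.subset_univ _)
            (fun S _ _ => setIntegral_nonneg (hAmeas S) (fun x _ => le_max_left _ _))
      _ = ∫ x, max 0 (x - k) ∂μ0 := (hdecomp _ (hintmax k hk)).symm
  have hge : sInf ((fun ρ => ∫ x, max 0 (x - k) ∂ρ) '' F) ≤ ∫ x, max 0 (x - k) ∂ν := by
    refine csInf_le ⟨0, ?_⟩ ⟨ν, hνF, rfl⟩
    rintro y ⟨ρ, _, rfl⟩
    exact integral_nonneg (fun x => le_max_left _ _)
  refine ⟨ν, hνF, le_antisymm (le_trans hobjν (le_of_eq hμ0opt)) hge, J, ω, pts,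
    fun j => lt_of_le_of_ne (hpnn _) (Ne.symm (hmemS _ (e j).2)), 
    fun j => hm_mem _ (hmemS _ (e j).2), hν⟩
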